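/- Let n ≥ 1, ζ = exp(2πi/n), and let A and B be n×n unitary matrices satisfying A·B = ζ^j·B·A where gcd(j, n) = 1. Then there exists a complex number c with |c| = 1 such that the eigenvalues of B, counted with multiplicity (i.e., the multiset of roots of its characteristic polynomial), are exactly c, c·ζ, c·ζ², …, c·ζ^{n−1}, each occurring with multiplicity one. -/

import Mathlib

open Matrix

/-- The primitive `n`-th root of unity `ζ = exp(2πi/n)`. -/
noncomputable def zeta (n : ℕ) : ℂ := Complex.exp (2 * Real.pi * Complex.I / n)

open Polynomial in
private lemma eval_cp {n : ℕ} (M : Matrix (Fin n) (Fin n) ℂ) (x : ℂ) :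
    M.charpoly.eval x = (x • (1 : Matrix (Fin n) (Fin n) ℂ) - M).det := by
  rw [Matrix.charpoly, ← Polynomial.coe_evalRingHom, RingHom.map_det]
  congr 1
  ext i k
  by_cases h : i = k <;>
    simp [Matrix.charmatrix_apply, h, Matrix.one_apply, Matrix.diagonal_apply]

private lemma eigen_abs_one {n : ℕ} (B : Matrix (Fin n) (Fin n) ℂ) (hB : B * Bᴴ = 1)
    {c : ℂ} (hc : c ∈ B.charpoly.roots) : ‖c‖ = 1 := by
  have hroot : B.charpoly.eval c = 0 := Polynomial.isRoot_of_mem_roots hc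
  rw [eval_cp] at hroot
  obtain ⟨v, hv, hv0⟩ := (Matrix.exists_mulVec_eq_zero_iff).mpr hroot
  have hBv : B *ᵥ v = c • v := by
    have h1 := sub_mulVec (c • (1 : Matrix (Fin n) (Fin n) ℂ)) B v
    rw [hv0, Matrix.smul_mulVec, Matrix.one_mulVec] at h1
    exact (sub_eq_zero.mp h1.symm).symm
  have hBHB : Bᴴ * B = 1 := mul_eq_one_comm.mp hB
  have key : star (B *ᵥ v) ⬝ᵥ (B *ᵥ v) = star v ⬝ᵥ v := by
    rw [Matrix.star_mulVec, Matrix.dotProduct_mulVec, Matrix.vecMul_vecMul, hBHB,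
      Matrix.vecMul_one]
  rw [hBv] at key
  set d := star v ⬝ᵥ v with hdef
  have hd : d ≠ 0 := by
    have hsum : d = ((∑ k, Complex.normSq (v k) : ℝ) : ℂ) := by
      push_cast
      simp [hdef, dotProduct, Complex.normSq_eq_conj_mul_self, Complex.star_def]
    intro h0
    rw [hsum, Complex.ofReal_eq_zero] at h0
    have : ∀ k ∈ Finset.univ, Complex.normSq (v k) = 0 :=
      (Finset.sum_eq_zero_iff_of_nonneg fun k _ => Complex.normSq_nonneg _).mp h0
    exact hv (funext fun k => Complex.normSq_eq_zero.mp (this k (Finset.mem_univ k)))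
  have hkey2 : (star c * c) * d = d := by
    rw [star_smul, smul_dotProduct, dotProduct_smul, smul_eq_mul, smul_eq_mul,
      ← mul_assoc] at key
    exact key
  have hcc : star c * c = 1 := mul_right_cancel₀ hd (hkey2.trans (one_mul d).symm)
  have hns : Complex.normSq c = 1 := by
    have h2 : ((Complex.normSq c : ℝ) : ℂ) = 1 := by
      rw [Complex.normSq_eq_conj_mul_self, ← Complex.star_def, hcc]
    exact_mod_cast h2
  rw [Complex.norm_def, hns, Real.sqrt_one]

/-- If `A`, `B` are unitary with `A * B = ζ^j • (B * A)` and `gcd(j, n) = 1`,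
then the eigenvalues of `B` (the multiset of roots of its characteristic
polynomial) are `c, c·ζ, …, c·ζ^(n-1)` for some `c` of modulus one. -/
theorem stmt7 {n : ℕ} (hn : 1 ≤ n) (j : ℕ) (hj : Nat.gcd j n = 1)
    (A B : Matrix (Fin n) (Fin n) ℂ) (hA : A * Aᴴ = 1) (hB : B * Bᴴ = 1)
    (hcomm : A * B = zeta n ^ j • (B * A)) :
    ∃ c : ℂ, ‖c‖ = 1 ∧
      B.charpoly.roots = (Multiset.range n).map fun k => c * zeta n ^ k := by
  classical
  open Polynomial in
  have hn0 : n ≠ 0 := Nat.one_le_iff_ne_zero.mp hn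
  have : NeZero n := ⟨hn0⟩
  have hζ : IsPrimitiveRoot (zeta n) n := Complex.isPrimitiveRoot_exp n hn0
  set ζ := zeta n with hζdef
  set ω := ζ ^ j with hωdef
  have hω : IsPrimitiveRoot ω n := hζ.pow_of_coprime j hj
  have hωne : ω ≠ 0 := by
    intro h
    have := hω.pow_eq_one
    rw [h] at this
    simp [hn0] at this
  have hdetA : A.det ≠ 0 := by
    intro h
    have := congrArg Matrix.det hA
    rw [Matrix.det_mul, h, zero_mul, Matrix.det_one] at this
    exact zero_ne_one this
  set p := B.charpoly with hp
  have hmonic : p.Monic := B.charpoly_monic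
  have hdeg : p.natDegree = n := by
    rw [hp, Matrix.charpoly_natDegree_eq_dim, Fintype.card_fin]
  have hcard : p.roots.card = n := by
    rw [← hdeg]
    exact (Polynomial.splits_iff_card_roots.mp (IsAlgClosed.splits p))
  have hprod : (p.roots.map fun a => Polynomial.X - Polynomial.C a).prod = p :=
    Polynomial.prod_multiset_X_sub_C_of_monic_of_roots_card_eq hmonic (hcard.trans hdeg.symm)
  have heval : ∀ x : ℂ, p.eval x = (p.roots.map fun r => x - r).prod := by
    intro x
    conv_lhs => rw [← hprod]
    rw [Polynomial.eval_multiset_prod, Multiset.map_map]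
    simp
  have hdet : ∀ x : ℂ, (x • (1 : Matrix (Fin n) (Fin n) ℂ) - ω • B).det
      = (x • (1 : Matrix (Fin n) (Fin n) ℂ) - B).det := by
    intro x
    have h1 : A * (x • (1 : Matrix (Fin n) (Fin n) ℂ) - B)
        = (x • (1 : Matrix (Fin n) (Fin n) ℂ) - ω • B) * A := by
      rw [mul_sub, sub_mul, mul_smul_comm, smul_mul_assoc, smul_mul_assoc,
        mul_one, one_mul, hcomm]
    have h2 := congrArg Matrix.det h1
    rw [Matrix.det_mul, Matrix.det_mul, mul_comm ((x • (1 : Matrix (Fin n) (Fin n) ℂ)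
      - ω • B).det) A.det] at h2
    exact (mul_left_cancel₀ hdetA h2).symm
  have hQ : (((p.roots.map fun r => ω * r)).map
      fun a => Polynomial.X - Polynomial.C a).prod = p := by
    apply Polynomial.funext
    intro x
    rw [Polynomial.eval_multiset_prod]
    simp only [Multiset.map_map, Function.comp_def, Polynomial.eval_sub,
      Polynomial.eval_X, Polynomial.eval_C]
    have rhs_eq : p.eval x = (x • (1 : Matrix (Fin n) (Fin n) ℂ) - B).det := eval_cp B x
    rw [rhs_eq, ← hdet x]
    have hsplit : x • (1 : Matrix (Fin n) (Fin n) ℂ) - ω • B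
        = ω • ((ω⁻¹ * x) • (1 : Matrix (Fin n) (Fin n) ℂ) - B) := by
      rw [smul_sub, smul_smul, ← mul_assoc, mul_inv_cancel₀ hωne, one_mul]
    rw [hsplit, Matrix.det_smul, Fintype.card_fin, ← eval_cp B (ω⁻¹ * x), heval]
    have : (p.roots.map fun r => x - ω * r).prod
        = (p.roots.map fun r => ω * (ω⁻¹ * x - r)).prod := by
      congr 1
      apply Multiset.map_congr rfl
      intro r _
      field_simp
    rw [this]
    have hmul : (p.roots.map fun r => ω * (ω⁻¹ * x - r)).prod
        = (p.roots.map fun _ => ω).prod * (p.roots.map fun r => ω⁻¹ * x - r).prod :=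
      Multiset.prod_map_mul
    rw [hmul, Multiset.map_const', Multiset.prod_replicate, hcard]
  have hroots : p.roots.map (fun r => ω * r) = p.roots := by
    calc p.roots.map (fun r => ω * r)
        = ((((p.roots.map fun r => ω * r)).map
            fun a => Polynomial.X - Polynomial.C a).prod).roots :=
          (Polynomial.roots_multiset_prod_X_sub_C _).symm
      _ = p.roots := by rw [hQ]
  have hstep : ∀ x ∈ p.roots, ω * x ∈ p.roots := by
    intro x hx
    rw [← hroots]
    exact Multiset.mem_map_of_mem _ hx
  have hpow : ∀ (m : ℕ) (x : ℂ), x ∈ p.roots → ω ^ m * x ∈ p.roots := by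
    intro m
    induction m with
    | zero => intro x hx; simpa using hx
    | succ k ih =>
        intro x hx
        have := hstep _ (ih x hx)
        rw [← mul_assoc, ← pow_succ'] at this
        exact this
  have hne : p.roots ≠ 0 := by
    intro h
    rw [h] at hcard
    simp at hcard
    omega
  obtain ⟨c, hc⟩ := Multiset.exists_mem_of_ne_zero hne
  refine ⟨c, eigen_abs_one B hB hc, ?_⟩
  obtain ⟨i, hi, hζω⟩ := hω.eq_pow_of_pow_eq_one hζ.pow_eq_one
  have hmem : ∀ k : ℕ, c * ζ ^ k ∈ p.roots := by
    intro k
    have heq : c * ζ ^ k = ω ^ (i * k) * c := by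
      rw [pow_mul, hζω, mul_comm]
    rw [heq]
    exact hpow _ _ hc
  have hc0 : c ≠ 0 := by
    intro h
    have habs := eigen_abs_one B hB hc
    rw [h] at habs
    simp at habs
  set T := (Multiset.range n).map fun k => c * ζ ^ k with hT
  have hnodupT : T.Nodup := by
    refine Multiset.Nodup.map_on ?_ (Multiset.nodup_range n)
    intro a ha b hb hab
    rw [Multiset.mem_range] at ha hb
    exact hζ.pow_inj ha hb (mul_left_cancel₀ hc0 hab)
  have hTle : T ≤ p.roots := by
    rw [Multiset.le_iff_subset hnodupT]
    intro x hx
    obtain ⟨k, _, rfl⟩ := Multiset.mem_map.mp hx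
    exact hmem k
  have hcardT : Multiset.card T = n := by
    rw [hT, Multiset.card_map, Multiset.card_range]
  exact (Multiset.eq_of_le_of_card_le hTle (by rw [hcard, hcardT])).symm
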